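/- arXiv:2003.01566 — 2 statements merged into one kernel-verified Lean document; each statement's English description precedes it below -/
import Mathlib

section
/- Let $X$ be a locally compact Hausdorff space, $E$ a normed space, and $A$ a completely regular subspace of $C_0(X,E)$. If $S$ and $R$ are T-sets in $E$ and $x, z \in X$ are points with $(S,x) \cap (R,z) \cap A = \{0\}$, then $x = z$ and $S \cap R = \{0\}$. -/
open scoped ZeroAtInfty

def NormAdditive {E : Type*} [NormedAddCommGroup E] (S : Set E) : Prop :=
  ∀ l : List E, (∀ e ∈ l, e ∈ S) → ‖l.sum‖ = (l.map fun e => ‖e‖).sum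

def IsTSet {E : Type*} [NormedAddCommGroup E] (S : Set E) : Prop :=
  NormAdditive S ∧ ∀ R : Set E, NormAdditive R → S ⊆ R → R = S

/-- The set `(S, x)` of functions attaining their norm at `x` with value in `S`. -/
def TSetAt {X : Type*} [TopologicalSpace X] {E : Type*} [NormedAddCommGroup E]
    (S : Set E) (x : X) : Set C₀(X, E) := {f | f x ∈ S ∧ ‖f‖ = ‖f x‖}


/-- `A` is completely regular. -/
def CompletelyRegularSubspace {X : Type*} [TopologicalSpace X] {E : Type*}
    [NormedAddCommGroup E] (A : Set C₀(X, E)) : Prop :=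
  ∀ (x : X) (u : E), ∀ U ∈ nhds x, ∃ f ∈ A, f x = u ∧ ‖f‖ = ‖u‖ ∧ ∀ z ∉ U, f z = 0

lemma ray_aux {E : Type*} [NormedAddCommGroup E] [NormedSpace ℝ E] (v : E) (l : List E)
    (hl : ∀ e ∈ l, e ∈ {w | ∃ t : ℝ, 0 ≤ t ∧ w = t • v}) :
    ∃ s : ℝ, 0 ≤ s ∧ l.sum = s • v ∧ (l.map fun e => ‖e‖).sum = s * ‖v‖ := by
  induction l with
  | nil => exact ⟨0, le_refl _, by simp, by simp⟩
  | cons e l ih =>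
    obtain ⟨t, ht, rfl⟩ := hl e (List.mem_cons_self ..)
    obtain ⟨s, hs, h1, h2⟩ := ih (fun e he => hl e (List.mem_cons_of_mem _ he))
    refine ⟨t + s, by positivity, by simp [h1, add_smul], ?_⟩
    simp [h1, h2, norm_smul, Real.norm_of_nonneg ht]
    ring

lemma ray_normAdditive {E : Type*} [NormedAddCommGroup E] [NormedSpace ℝ E] (v : E) :
    NormAdditive {w | ∃ t : ℝ, 0 ≤ t ∧ w = t • v} := by
  intro l hl
  obtain ⟨s, hs, h1, h2⟩ := ray_aux v l hl
  rw [h1, h2, norm_smul, Real.norm_of_nonneg hs]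

lemma norm_add_smul_eq {E : Type*} [NormedAddCommGroup E] [NormedSpace ℝ E]
    {a u : E} {c : ℝ} (H : ∀ n : ℕ, ‖a + (n : ℝ) • u‖ = c + n * ‖u‖)
    {s : ℝ} (hs : 0 ≤ s) : ‖a + s • u‖ = c + s * ‖u‖ := by
  have h0 : ‖a‖ = c := by simpa using H 0
  have hub : ‖a + s • u‖ ≤ c + s * ‖u‖ := by
    calc ‖a + s • u‖ ≤ ‖a‖ + ‖s • u‖ := norm_add_le _ _
    _ = c + s * ‖u‖ := by rw [h0, norm_smul, Real.norm_of_nonneg hs]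
  have hn : s ≤ (⌈s⌉₊ : ℝ) := Nat.le_ceil s
  have hlb : c + (⌈s⌉₊ : ℝ) * ‖u‖ ≤ ‖a + s • u‖ + ((⌈s⌉₊ : ℝ) - s) * ‖u‖ := by
    calc c + (⌈s⌉₊ : ℝ) * ‖u‖ = ‖a + (⌈s⌉₊ : ℝ) • u‖ := (H ⌈s⌉₊).symm
    _ = ‖(a + s • u) + ((⌈s⌉₊ : ℝ) - s) • u‖ := by rw [add_assoc, ← add_smul]; ring_nf
    _ ≤ ‖a + s • u‖ + ‖((⌈s⌉₊ : ℝ) - s) • u‖ := norm_add_le _ _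
    _ = ‖a + s • u‖ + ((⌈s⌉₊ : ℝ) - s) * ‖u‖ := by
        rw [norm_smul, Real.norm_of_nonneg (by linarith)]
  nlinarith [norm_nonneg u]

lemma smul_mem_isTSet {E : Type*} [NormedAddCommGroup E] [NormedSpace ℝ E] {S : Set E}
    (hS : IsTSet S) {u : E} (hu : u ∈ S) {t : ℝ} (ht : 0 ≤ t) : t • u ∈ S := by
  classical
  have hNA : NormAdditive (S ∪ {t • u}) := by
    intro l hl
    have hperm := List.filter_append_perm (fun e => decide (e ∈ S)) l
    set l₁ := l.filter (fun e => decide (e ∈ S)) with hl₁def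
    set l₂ := l.filter (fun e => !decide (e ∈ S)) with hl₂def
    have hsum : l.sum = l₁.sum + l₂.sum := by
      rw [← hperm.sum_eq, List.sum_append]
    have hmap : (l.map fun e => ‖e‖).sum
        = (l₁.map fun e => ‖e‖).sum + (l₂.map fun e => ‖e‖).sum := by
      rw [← (hperm.map fun e => ‖e‖).sum_eq, List.map_append, List.sum_append]
    have hl₁S : ∀ e ∈ l₁, e ∈ S := by
      intro e he
      have := List.of_mem_filter he
      simpa using this
    have hl₂ : ∀ e ∈ l₂, e = t • u := by
      intro e he
      have h1 : e ∉ S := by have := List.of_mem_filter he; simpa using this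
      have h2 : e ∈ S ∪ {t • u} := hl e (List.mem_of_mem_filter he)
      rcases h2 with h2 | h2
      · exact absurd h2 h1
      · exact h2
    have hrep : l₂ = List.replicate l₂.length (t • u) := List.eq_replicate_of_mem hl₂
    set k := l₂.length
    have hl₂sum : l₂.sum = ((k : ℝ) * t) • u := by
      rw [hrep, List.sum_replicate, mul_smul, ← Nat.cast_smul_eq_nsmul ℝ]
    have hl₂map : (l₂.map fun e => ‖e‖).sum = (k : ℝ) * t * ‖u‖ := by
      rw [hrep, List.map_replicate, List.sum_replicate, nsmul_eq_mul,
        norm_smul, Real.norm_of_nonneg ht]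
      ring
    set a := l₁.sum
    set c := (l₁.map fun e => ‖e‖).sum
    have H : ∀ n : ℕ, ‖a + (n : ℝ) • u‖ = c + n * ‖u‖ := by
      intro n
      have hmem : ∀ e ∈ l₁ ++ List.replicate n u, e ∈ S := by
        intro e he
        rcases List.mem_append.mp he with he | he
        · exact hl₁S e he
        · rw [List.eq_of_mem_replicate he]; exact hu
      have := hS.1 _ hmem
      rw [List.sum_append, List.sum_replicate, List.map_append, List.sum_append,
        List.map_replicate, List.sum_replicate, nsmul_eq_mul,
        ← Nat.cast_smul_eq_nsmul ℝ] at this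
      exact this
    rw [hsum, hmap, hl₂sum, hl₂map,
      norm_add_smul_eq H (by positivity)]
  have := hS.2 _ hNA Set.subset_union_left
  rw [← this]
  exact Or.inr rfl

lemma exists_ne_zero_of_isTSet {E : Type*} [NormedAddCommGroup E] [NormedSpace ℝ E]
    [Nontrivial E] {S : Set E} (hS : IsTSet S) : ∃ u ∈ S, u ≠ 0 := by
  by_contra hcon
  push_neg at hcon
  obtain ⟨v, hv⟩ := exists_ne (0 : E)
  have hsub : S ⊆ {w | ∃ t : ℝ, 0 ≤ t ∧ w = t • v} := by
    intro w hw
    exact ⟨0, le_refl _, by rw [hcon w hw]; simp⟩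
  have := hS.2 _ (ray_normAdditive v) hsub
  have hvS : v ∈ S := by rw [← this]; exact ⟨1, by norm_num, by simp⟩
  exact hv (hcon v hvS)

lemma c0_norm_apply_le {X : Type*} [TopologicalSpace X] {E : Type*} [NormedAddCommGroup E]
    (f : C₀(X, E)) (y : X) : ‖f y‖ ≤ ‖f‖ := by
  rw [← ZeroAtInftyContinuousMap.norm_toBCF_eq_norm]
  exact f.toBCF.norm_coe_le_norm y

lemma c0_norm_le {X : Type*} [TopologicalSpace X] {E : Type*} [NormedAddCommGroup E]
    (f : C₀(X, E)) {C : ℝ} (hC : 0 ≤ C) (hb : ∀ y, ‖f y‖ ≤ C) : ‖f‖ ≤ C := by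
  rw [← ZeroAtInftyContinuousMap.norm_toBCF_eq_norm]
  exact (BoundedContinuousFunction.norm_le hC).mpr hb

theorem eq_point_and_trivial_intersection {X : Type*} [TopologicalSpace X]
    [LocallyCompactSpace X] [T2Space X] {E : Type*} [NormedAddCommGroup E]
    [NormedSpace ℝ E] [Nontrivial E] (A : Submodule ℝ C₀(X, E))
    (hA : CompletelyRegularSubspace (A : Set C₀(X, E)))
    (S R : Set E) (hS : IsTSet S) (hR : IsTSet R) (x z : X)
    (h : TSetAt S x ∩ TSetAt R z ∩ A = {0}) :
    x = z ∧ S ∩ R = {0} := by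
  obtain ⟨u, huS, hu0⟩ := exists_ne_zero_of_isTSet hS
  obtain ⟨v, hvR, hv0⟩ := exists_ne_zero_of_isTSet hR
  set v' := (‖u‖ / ‖v‖) • v with hv'def
  have hv'R : v' ∈ R := smul_mem_isTSet hR hvR (by positivity)
  have hv'norm : ‖v'‖ = ‖u‖ := by
    rw [hv'def, norm_smul, Real.norm_of_nonneg (by positivity), div_mul_cancel₀]
    exact norm_ne_zero_iff.mpr hv0
  have hxz : x = z := by
    by_contra hne
    obtain ⟨U, V, hU, hV, hxU, hzV, hUV⟩ := t2_separation hne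
    obtain ⟨f, hfA, hfx, hfn, hf0⟩ := hA x u U (hU.mem_nhds hxU)
    obtain ⟨g, hgA, hgz, hgn, hg0⟩ := hA z v' V (hV.mem_nhds hzV)
    have hxV : x ∉ V := Set.disjoint_left.mp hUV hxU
    have hzU : z ∉ U := Set.disjoint_right.mp hUV hzV
    set h' : C₀(X, E) := f + g with hh'def
    have hh'x : h' x = u := by
      simp [hh'def, hfx, hg0 x hxV]
    have hh'z : h' z = v' := by
      simp [hh'def, hgz, hf0 z hzU]
    have hbound : ∀ y, ‖h' y‖ ≤ ‖u‖ := by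
      intro y
      by_cases hyU : y ∈ U
      · have hyV : y ∉ V := Set.disjoint_left.mp hUV hyU
        have : h' y = f y := by simp [hh'def, hg0 y hyV]
        rw [this, ← hfn]
        exact c0_norm_apply_le f y
      · have : h' y = g y := by simp [hh'def, hf0 y hyU]
        rw [this, ← hv'norm, ← hgn]
        exact c0_norm_apply_le g y
    have hnorm : ‖h'‖ = ‖u‖ :=
      le_antisymm (c0_norm_le h' (norm_nonneg u) hbound)
        (by rw [← hh'x]; exact c0_norm_apply_le h' x)
    have hmem : h' ∈ TSetAt S x ∩ TSetAt R z ∩ (A : Set C₀(X, E)) := by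
      refine ⟨⟨⟨by rw [hh'x]; exact huS, by rw [hh'x, hnorm]⟩,
        ⟨by rw [hh'z]; exact hv'R, by rw [hh'z, hnorm, hv'norm]⟩⟩,
        A.add_mem hfA hgA⟩
    rw [h] at hmem
    have : h' x = 0 := by rw [Set.mem_singleton_iff.mp hmem]; rfl
    exact hu0 (by rw [← hh'x, this])
  subst hxz
  refine ⟨rfl, ?_⟩
  have h0S : (0 : E) ∈ S := by
    have := smul_mem_isTSet hS huS (le_refl (0 : ℝ))
    simpa using this
  have h0R : (0 : E) ∈ R := by
    have := smul_mem_isTSet hR hvR (le_refl (0 : ℝ))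
    simpa using this
  refine Set.eq_singleton_iff_unique_mem.mpr ⟨⟨h0S, h0R⟩, fun w hw => ?_⟩
  by_contra hw0
  obtain ⟨f, hfA, hfx, hfn, -⟩ := hA x w Set.univ Filter.univ_mem
  have hmem : f ∈ TSetAt S x ∩ TSetAt R x ∩ (A : Set C₀(X, E)) :=
    ⟨⟨⟨by rw [hfx]; exact hw.1, by rw [hfx, hfn]⟩,
      ⟨by rw [hfx]; exact hw.2, by rw [hfx, hfn]⟩⟩, hfA⟩
  rw [h] at hmem
  have : f x = 0 := by rw [Set.mem_singleton_iff.mp hmem]; rfl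
  exact hw0 (by rw [← hfx, this])
end

section
/- Every strictly convex normed space satisfies property $(D)$, i.e., any two T-sets in it are discrepant. -/
/-- Two T-sets are discrepant. -/
def Discrepant {E : Type*} [NormedAddCommGroup E] (S R : Set E) : Prop :=
  S ∩ R = {0} ∨ ∃ L : Set E, IsTSet L ∧ S ∩ L = {0} ∧ R ∩ L = {0}

section Aux

variable {E : Type*} [NormedAddCommGroup E] [NormedSpace ℝ E]

def Ray (x : E) : Set E := {y : E | ∃ t : ℝ, 0 ≤ t ∧ y = t • x}

lemma ray_sum (x : E) : ∀ l : List E, (∀ e ∈ l, e ∈ Ray x) →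
    ∃ c : ℝ, 0 ≤ c ∧ l.sum = c • x ∧ (l.map fun e => ‖e‖).sum = c * ‖x‖ := by
  intro l
  induction l with
  | nil => intro _; exact ⟨0, le_refl 0, by simp, by simp⟩
  | cons a l ih =>
    intro h
    obtain ⟨t, ht, ha⟩ := h a List.mem_cons_self
    obtain ⟨c, hc, hs, hn⟩ := ih fun e he => h e (List.mem_cons_of_mem a he)
    refine ⟨t + c, by positivity, ?_, ?_⟩
    · simp [hs, ha, add_smul]
    · simp [hn, ha, norm_smul, abs_of_nonneg ht, add_mul, Real.norm_eq_abs]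

lemma ray_normAdditive_s17 (x : E) : NormAdditive (Ray x) := by
  intro l hl
  obtain ⟨c, hc, hs, hn⟩ := ray_sum x l hl
  rw [hs, hn, norm_smul, Real.norm_eq_abs, abs_of_nonneg hc]

lemma normAdditive_pair {R : Set E} (hR : NormAdditive R) {u v : E} (hu : u ∈ R) (hv : v ∈ R) :
    ‖u + v‖ = ‖u‖ + ‖v‖ := by
  have := hR [u, v] (by simp [hu, hv])
  simpa using this

lemma ray_isTSet [StrictConvexSpace ℝ E] {x : E} (hx : x ≠ 0) : IsTSet (Ray x) := by
  refine ⟨ray_normAdditive_s17 x, fun R hR hsub => ?_⟩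
  apply Set.Subset.antisymm _ hsub
  intro y hy
  have hxR : x ∈ R := hsub ⟨1, zero_le_one, (one_smul ℝ x).symm⟩
  have hray : SameRay ℝ x y := sameRay_iff_norm_add.mpr (normAdditive_pair hR hxR hy)
  obtain ⟨t, ht, hty⟩ := hray.exists_nonneg_left hx
  exact ⟨t, ht, hty.symm⟩

lemma tset_eq_ray [StrictConvexSpace ℝ E] {S : Set E} (hS : IsTSet S) {x : E} (hx : x ≠ 0)
    (hxS : x ∈ S) : S = Ray x := by
  have hsub : S ⊆ Ray x := by
    intro y hy
    have hray : SameRay ℝ x y := sameRay_iff_norm_add.mpr (normAdditive_pair hS.1 hxS hy)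
    obtain ⟨t, ht, hty⟩ := hray.exists_nonneg_left hx
    exact ⟨t, ht, hty.symm⟩
  exact (hS.2 (Ray x) (ray_normAdditive_s17 x) hsub).symm

lemma ray_inter_neg {x y : E} (hx : x ≠ 0) {c : ℝ} (hc : 0 ≤ c) (hy : y = c • x) :
    Ray y ∩ Ray (-x) = {0} := by
  ext z
  simp only [Set.mem_inter_iff, Set.mem_singleton_iff]
  constructor
  · rintro ⟨⟨t, ht, rfl⟩, ⟨s, hs, hz⟩⟩
    rw [hy, smul_smul, smul_neg, ← neg_smul] at hz
    have : (t * c + s) • x = 0 := by rw [add_smul, hz]; simp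
    have hts : t * c + s = 0 := by
      by_contra h
      exact hx (by simpa [h] using smul_eq_zero.mp this)
    have hs0 : s = 0 := le_antisymm (by nlinarith [mul_nonneg ht hc]) hs
    have htc : t * c = 0 := by linarith
    rw [hy, smul_smul, htc, zero_smul]
  · rintro rfl
    exact ⟨⟨0, le_refl 0, (zero_smul ℝ _).symm⟩, ⟨0, le_refl 0, (zero_smul ℝ _).symm⟩⟩

end Aux

theorem strictConvex_propertyD {E : Type*} [NormedAddCommGroup E] [NormedSpace ℝ E]
    (hsc : ∀ u v : E, ‖u‖ = 1 → ‖v‖ = 1 → u ≠ v → ‖u + v‖ < 2) :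
    ∀ S R : Set E, IsTSet S → IsTSet R → Discrepant S R := by
  haveI : StrictConvexSpace ℝ E :=
    StrictConvexSpace.of_norm_add_ne_two fun u v hu hv huv => (hsc u v hu hv huv).ne
  intro S R hS hR
  by_cases htriv : ∀ z : E, z = 0
  · -- trivial space: S = R = {0}
    have hz : NormAdditive ({0} : Set E) := by
      intro l hl
      have h0 : ∀ e ∈ l, e = (0 : E) := fun e _ => htriv e
      rw [List.sum_eq_zero h0, List.sum_eq_zero]
      · simp
      · intro n hn
        obtain ⟨e, he, rfl⟩ := List.mem_map.mp hn
        simp [htriv e]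
    have hS0 : S = {0} := by
      have := hS.2 ({0} ∪ S) (by
        intro l hl
        exact hz l fun e he => by simp [htriv e]) (by simp)
      rw [← this]
      ext z; simp [htriv z]
    have hR0 : R = {0} := by
      have := hR.2 ({0} ∪ R) (by
        intro l hl
        exact hz l fun e he => by simp [htriv e]) (by simp)
      rw [← this]
      ext z; simp [htriv z]
    left; rw [hS0, hR0]; simp
  · push_neg at htriv
    obtain ⟨w, hw⟩ := htriv
    -- S and R contain nonzero elements
    have hnonzero : ∀ T : Set E, IsTSet T → ∃ x ≠ 0, x ∈ T := by
      intro T hT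
      by_contra h
      push_neg at h
      have hsub : T ⊆ Ray w := by
        intro y hy
        rcases eq_or_ne y 0 with rfl | hy0
        · exact ⟨0, le_refl 0, (zero_smul ℝ _).symm⟩
        · exact absurd hy (h y hy0)
      have := hT.2 (Ray w) (ray_normAdditive_s17 w) hsub
      have hwT : w ∈ T := this ▸ ⟨1, zero_le_one, (one_smul ℝ w).symm⟩
      exact (h w hw) hwT
    obtain ⟨x, hx, hxS⟩ := hnonzero S hS
    obtain ⟨y, hy, hyR⟩ := hnonzero R hR
    have hSeq : S = Ray x := tset_eq_ray hS hx hxS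
    have hReq : R = Ray y := tset_eq_ray hR hy hyR
    by_cases hray : SameRay ℝ x y
    · -- take L = Ray (-x)
      right
      obtain ⟨c, hc, hcy⟩ := hray.exists_nonneg_left hx
      refine ⟨Ray (-x), ray_isTSet (neg_ne_zero.mpr hx), ?_, ?_⟩
      · rw [hSeq]
        exact ray_inter_neg hx zero_le_one (by rw [one_smul])
      · rw [hReq]
        exact ray_inter_neg hx hc hcy.symm
    · left
      rw [hSeq, hReq]
      ext z
      simp only [Set.mem_inter_iff, Set.mem_singleton_iff]
      constructor
      · rintro ⟨⟨t, ht, rfl⟩, ⟨s, hs, hz⟩⟩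
        by_contra h0
        have ht0 : t ≠ 0 := fun h => h0 (by simp [h])
        have hs0 : s ≠ 0 := fun h => by rw [h, zero_smul] at hz; exact h0 hz
        exact hray (Or.inr (Or.inr
          ⟨t, s, lt_of_le_of_ne ht (Ne.symm ht0), lt_of_le_of_ne hs (Ne.symm hs0), hz⟩))
      · rintro rfl
        exact ⟨⟨0, le_refl 0, (zero_smul ℝ _).symm⟩, ⟨0, le_refl 0, (zero_smul ℝ _).symm⟩⟩
end
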